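/- In the standard binary instrumental variable model, if W ⊥ Y | X (so ζ_{yx.w} = α_x^{[y=1]}(1-α_x)^{[y=0]} β_w^{[x=1]}(1-β_w)^{[x=0]} with α_x = P(Y=1|X=x), β_w = P(X=1|W=w)), then the Balke–Pearl bound width satisfies U_SIV − L_SIV = 1 − |β_1 − β_0|, where U_SIV = (1 − ζ_{01.1}) − ζ_{10.0} and L_SIV = ζ_{11.1} − (1 − ζ_{00.0}) under β_1 ≥ β_0 (and symmetrically otherwise). -/
import Mathlib

/-- Balke–Pearl bound width under `W ⊥ Y | X` in the standard binary IV model: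
`ζ_{yx.w} = α_x^{[y=1]}(1-α_x)^{[y=0]} β_w^{[x=1]}(1-β_w)^{[x=0]}`.
With `U_SIV = (1 - ζ_{01.1}) - ζ_{10.0}` and `L_SIV = ζ_{11.1} - (1 - ζ_{00.0})`
when `β₁ ≥ β₀` (and the `w`-swapped expressions otherwise),
the width is `U_SIV - L_SIV = 1 - |β₁ - β₀|`. -/
theorem stmt0 (a0 a1 b0 b1 : ℝ)
    (ha0 : a0 ∈ Set.Icc (0:ℝ) 1) (ha1 : a1 ∈ Set.Icc (0:ℝ) 1)
    (hb0 : b0 ∈ Set.Icc (0:ℝ) 1) (hb1 : b1 ∈ Set.Icc (0:ℝ) 1) :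
    (b0 ≤ b1 →
      ((1 - (1 - a1) * b1) - a0 * (1 - b0)) - (a1 * b1 - (1 - (1 - a0) * (1 - b0)))
        = 1 - |b1 - b0|) ∧
    (b1 ≤ b0 →
      ((1 - (1 - a1) * b0) - a0 * (1 - b1)) - (a1 * b0 - (1 - (1 - a0) * (1 - b1)))
        = 1 - |b1 - b0|) := by
  constructor
  · intro h
    rw [abs_of_nonneg (by linarith)]
    ring
  · intro h
    rw [abs_of_nonpos (by linarith)]
    ring
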